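/- arXiv:1404.0666 — 2 statements merged into one kernel-verified Lean document; each statement's English description precedes it below -/
import Mathlib

section
/- The augmented complex 0 → P_2 →^{d_2} P_1 →^{d_1} P_0 →^{ε} ℤ → 0 is exact; that is, ε is surjective, ker ε = im d_1, ker d_1 = im d_2, and d_2 is injective. Hence P is a free resolution of the trivial ℤG-module ℤ over ℤG. -/
open scoped TensorProduct
open scoped commutatorElement

namespace SurfaceOr

/-- Generators: `Sum.inl i` is `aᵢ`, `Sum.inr i` is `bᵢ`. -/
abbrev Gen (n : ℕ) := Fin n ⊕ Fin n

/-- The single relator `[a₁,b₁][a₂,b₂]⋯[aₙ,bₙ]` of the orientable surface group. -/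
def rel (n : ℕ) : FreeGroup (Gen n) :=
  (List.ofFn fun i : Fin n =>
    ⁅(FreeGroup.of (Sum.inl i) : FreeGroup (Gen n)), FreeGroup.of (Sum.inr i)⁆).prod

/-- The orientable surface group of genus `n`. -/
abbrev SurfaceGroup (n : ℕ) := PresentedGroup ({rel n} : Set (FreeGroup (Gen n)))

noncomputable def a {n : ℕ} (i : Fin n) : SurfaceGroup n := PresentedGroup.of (Sum.inl i)
noncomputable def b {n : ℕ} (i : Fin n) : SurfaceGroup n := PresentedGroup.of (Sum.inr i)

/-- `q k = p₁ p₂ ⋯ p_k` where `pᵢ = [aᵢ,bᵢ]`. -/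
noncomputable def q {n : ℕ} (k : ℕ) : SurfaceGroup n :=
  ((List.ofFn fun i : Fin n => ⁅a i, b i⁆).take k).prod

/-- The integral group ring `ℤG`. -/
abbrev A (n : ℕ) := MonoidAlgebra ℤ (SurfaceGroup n)

/-- Inclusion of the group in its group ring. -/
noncomputable def j {n : ℕ} : SurfaceGroup n →* A n := MonoidAlgebra.of ℤ (SurfaceGroup n)

/-- The Fox derivative `∂p/∂aᵢ = q_{i-1}(1 - aᵢbᵢaᵢ⁻¹)`. -/
noncomputable def Fa {n : ℕ} (i : Fin n) : A n :=
  j (q i.val) * (1 - j (a i * b i * (a i)⁻¹))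

/-- The Fox derivative `∂p/∂bᵢ = q_{i-1}aᵢ(1 - bᵢaᵢ⁻¹bᵢ⁻¹)`. -/
noncomputable def Fb {n : ℕ} (i : Fin n) : A n :=
  j (q i.val * a i) * (1 - j (b i * (a i)⁻¹ * (b i)⁻¹))

abbrev P0 (n : ℕ) := A n
abbrev P1 (n : ℕ) := Gen n → A n
abbrev P2 (n : ℕ) := A n

/-- Coefficients of `d₁`. -/
noncomputable def c {n : ℕ} : Gen n → A n
  | .inl i => j (a i) - 1
  | .inr i => j (b i) - 1

/-- Coefficients of `d₂` (the Fox derivatives of the relator). -/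
noncomputable def fox {n : ℕ} : Gen n → A n
  | .inl i => Fa i
  | .inr i => Fb i

/-- `d₁ : P₁ → P₀`, `yᵢ ↦ (aᵢ-1)x`, `zᵢ ↦ (bᵢ-1)x`. -/
noncomputable def d1 {n : ℕ} : P1 n →ₗ[A n] P0 n where
  toFun f := ∑ s, f s * c s
  map_add' f g := by simp [add_mul, Finset.sum_add_distrib]
  map_smul' r f := by simp [Finset.mul_sum, mul_assoc, smul_eq_mul, mul_add]

/-- `d₂ : P₂ → P₁`, `w ↦ Σᵢ (∂p/∂aᵢ)yᵢ + (∂p/∂bᵢ)zᵢ`. -/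
noncomputable def d2 {n : ℕ} : P2 n →ₗ[A n] P1 n where
  toFun r := fun s => r * fox s
  map_add' r r' := by funext s; simp [add_mul]
  map_smul' r r' := by funext s; simp [mul_assoc, smul_eq_mul]

/-- The augmentation `ε : ℤG → ℤ`. -/
noncomputable def aug {n : ℕ} : A n →ₐ[ℤ] ℤ := MonoidAlgebra.lift ℤ ℤ (SurfaceGroup n) 1

section Fox
variable {n : ℕ} {H : Type} [Group H]

noncomputable def actAut (h : H) :
    Multiplicative (Gen n → MonoidAlgebra ℤ H) ≃* Multiplicative (Gen n → MonoidAlgebra ℤ H) where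
  toFun m := Multiplicative.ofAdd fun s => MonoidAlgebra.of ℤ H h * (Multiplicative.toAdd m) s
  invFun m := Multiplicative.ofAdd fun s => MonoidAlgebra.of ℤ H h⁻¹ * (Multiplicative.toAdd m) s
  left_inv m := by
    simp only [toAdd_ofAdd]
    conv_rhs => rw [← ofAdd_toAdd m]
    congr 1
    funext s
    rw [← mul_assoc, ← map_mul, inv_mul_cancel, map_one, one_mul]
  right_inv m := by
    simp only [toAdd_ofAdd]
    conv_rhs => rw [← ofAdd_toAdd m]
    congr 1
    funext s
    rw [← mul_assoc, ← map_mul, mul_inv_cancel, map_one, one_mul]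
  map_mul' m m' := by
    show Multiplicative.ofAdd _ = Multiplicative.ofAdd _ * Multiplicative.ofAdd _
    rw [← ofAdd_add]
    congr 1
    funext s
    show MonoidAlgebra.of ℤ H h * Multiplicative.toAdd (m * m') s = _
    rw [toAdd_mul]
    show _ * (Multiplicative.toAdd m s + Multiplicative.toAdd m' s) = _
    rw [mul_add]
    rfl

noncomputable def act : H →* MulAut (Multiplicative (Gen n → MonoidAlgebra ℤ H)) where
  toFun := actAut
  map_one' := by
    ext m : 1
    simp only [actAut, MulEquiv.coe_mk, Equiv.coe_fn_mk, MulAut.one_apply]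
    conv_rhs => rw [← ofAdd_toAdd m]
    congr 1
    funext s
    show MonoidAlgebra.of ℤ H 1 * _ = _
    rw [map_one, one_mul]
  map_mul' h h' := by
    ext m : 1
    show actAut (h * h') m = actAut h (actAut h' m)
    unfold actAut
    simp only [MulEquiv.coe_mk, Equiv.coe_fn_mk, toAdd_ofAdd]
    congr 1
    funext s
    rw [map_mul, mul_assoc]

variable (u : FreeGroup (Gen n) →* H)

noncomputable def Phi :
    FreeGroup (Gen n) →* (Multiplicative (Gen n → MonoidAlgebra ℤ H)) ⋊[act] H :=
  FreeGroup.lift fun s => ⟨Multiplicative.ofAdd (Pi.single s 1), u (FreeGroup.of s)⟩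

noncomputable def Dg (w : FreeGroup (Gen n)) : Gen n → MonoidAlgebra ℤ H :=
  Multiplicative.toAdd (Phi u w).left

lemma Phi_right (w : FreeGroup (Gen n)) : (Phi u w).right = u w := by
  have h : (SemidirectProduct.rightHom.comp (Phi u)) = u := by
    apply FreeGroup.ext_hom
    intro s
    simp [Phi]
  exact DFunLike.congr_fun h w

@[simp] lemma Dg_of (s : Gen n) : Dg u (FreeGroup.of s) = Pi.single s 1 := by
  simp [Dg, Phi]

@[simp] lemma Dg_one : Dg u 1 = 0 := by
  simp [Dg]

lemma Dg_mul (v w : FreeGroup (Gen n)) :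
    Dg u (v * w) = fun s => Dg u v s + MonoidAlgebra.of ℤ H (u v) * Dg u w s := by
  unfold Dg
  rw [map_mul, SemidirectProduct.mul_left, Phi_right]
  rfl

lemma Dg_inv (w : FreeGroup (Gen n)) :
    Dg u w⁻¹ = fun s => -(MonoidAlgebra.of ℤ H ((u w)⁻¹) * Dg u w s) := by
  have h0 : Dg u (w * w⁻¹) = 0 := by rw [mul_inv_cancel]; simp
  rw [Dg_mul] at h0
  funext s
  have h1 := congrFun h0 s
  simp only [Pi.zero_apply] at h1
  have h2 : MonoidAlgebra.of ℤ H (u w) * Dg u w⁻¹ s = -(Dg u w s) :=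
    eq_neg_of_add_eq_zero_right h1
  calc Dg u w⁻¹ s
      = MonoidAlgebra.of ℤ H ((u w)⁻¹) * (MonoidAlgebra.of ℤ H (u w) * Dg u w⁻¹ s) := by
        rw [← mul_assoc, ← map_mul, inv_mul_cancel, map_one, one_mul]
    _ = -(MonoidAlgebra.of ℤ H ((u w)⁻¹) * Dg u w s) := by rw [h2, mul_neg]

lemma Dg_d1 (w : FreeGroup (Gen n)) :
    ∑ s, Dg u w s * (MonoidAlgebra.of ℤ H (u (FreeGroup.of s)) - 1)
      = MonoidAlgebra.of ℤ H (u w) - 1 := by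
  have hp : ∀ t : Gen n, (pure t : FreeGroup (Gen n)) = FreeGroup.of t := fun _ => rfl
  have key : ∀ v : FreeGroup (Gen n),
      (∑ s, Dg u v s * (MonoidAlgebra.of ℤ H (u (FreeGroup.of s)) - 1)
        = MonoidAlgebra.of ℤ H (u v) - 1) →
      (∑ s, Dg u v⁻¹ s * (MonoidAlgebra.of ℤ H (u (FreeGroup.of s)) - 1)
        = MonoidAlgebra.of ℤ H (u v⁻¹) - 1) := by
    intro v ih
    rw [Dg_inv]
    have h1 : ∀ s : Gen n, -(MonoidAlgebra.of ℤ H ((u v)⁻¹) * Dg u v s) *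
        (MonoidAlgebra.of ℤ H (u (FreeGroup.of s)) - 1)
        = -(MonoidAlgebra.of ℤ H ((u v)⁻¹) *
            (Dg u v s * (MonoidAlgebra.of ℤ H (u (FreeGroup.of s)) - 1))) := by
      intro s; noncomm_ring
    simp only [h1]
    rw [Finset.sum_neg_distrib, ← Finset.mul_sum, ih]
    rw [mul_sub, mul_one, ← map_mul, inv_mul_cancel, map_one, neg_sub,
      show u v⁻¹ = (u v)⁻¹ from map_inv u v]
  induction w using FreeGroup.induction_on with
  | C1 => simp only [Dg_one, Pi.zero_apply, zero_mul, Finset.sum_const_zero, map_one, sub_self]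
  | of s =>
      rw [Finset.sum_eq_single s]
      · rw [Dg_of, Pi.single_eq_same, one_mul]
      · intro t _ hts
        rw [Dg_of, Pi.single_eq_of_ne hts, zero_mul]
      · intro h; exact absurd (Finset.mem_univ s) h
  | inv_of s ih => exact key _ ih
  | mul v w ihv ihw =>
      rw [Dg_mul]
      have h1 : ∀ s : Gen n, (Dg u v s + MonoidAlgebra.of ℤ H (u v) * Dg u w s) *
          (MonoidAlgebra.of ℤ H (u (FreeGroup.of s)) - 1)
          = Dg u v s * (MonoidAlgebra.of ℤ H (u (FreeGroup.of s)) - 1)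
            + MonoidAlgebra.of ℤ H (u v) *
              (Dg u w s * (MonoidAlgebra.of ℤ H (u (FreeGroup.of s)) - 1)) := by
        intro s; noncomm_ring
      simp only [h1]
      rw [Finset.sum_add_distrib, ihv, ← Finset.mul_sum, ihw, map_mul, map_mul]
      noncomm_ring

end Fox

section Surface
variable {n : ℕ}

noncomputable def pr {n : ℕ} : FreeGroup (Gen n) →* SurfaceGroup n :=
  PresentedGroup.mk ({rel n} : Set (FreeGroup (Gen n)))

lemma pr_of (s : Gen n) : pr (FreeGroup.of s) = PresentedGroup.of s := rfl

lemma pr_surjective : Function.Surjective (pr (n := n)) :=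
  PresentedGroup.mk_surjective _

lemma pr_eq_one_iff (w : FreeGroup (Gen n)) :
    pr w = 1 ↔ w ∈ Subgroup.normalClosure ({rel n} : Set (FreeGroup (Gen n))) :=
  QuotientGroup.eq_one_iff w

/-- Fox derivative with coefficients in `ℤG`. -/
noncomputable def DG {n : ℕ} (w : FreeGroup (Gen n)) : P1 n := Dg pr w

/-- Fox derivative with coefficients in the free group ring. -/
noncomputable def DF {n : ℕ} (w : FreeGroup (Gen n)) :
    Gen n → MonoidAlgebra ℤ (FreeGroup (Gen n)) :=
  Dg (MonoidHom.id (FreeGroup (Gen n))) w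

lemma c_eq (s : Gen n) : c s = j (pr (FreeGroup.of s)) - 1 := by
  cases s <;> rfl

lemma d1_apply (f : P1 n) : d1 f = ∑ s, f s * c s := rfl

lemma d2_apply (r : P2 n) (s : Gen n) : d2 r s = r * fox s := rfl

lemma d1_DG (w : FreeGroup (Gen n)) : d1 (DG w) = j (pr w) - 1 := by
  rw [d1_apply]
  simp only [c_eq]
  exact Dg_d1 pr w

noncomputable def prbar {n : ℕ} :
    MonoidAlgebra ℤ (FreeGroup (Gen n)) →+* A n :=
  MonoidAlgebra.mapDomainRingHom ℤ (pr (n := n))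

lemma prbar_single (w : FreeGroup (Gen n)) (k : ℤ) :
    prbar (MonoidAlgebra.single w k) = MonoidAlgebra.single (pr w) k := by
  simp [prbar, Finsupp.mapDomain_single]

lemma prbar_of (w : FreeGroup (Gen n)) :
    prbar (MonoidAlgebra.of ℤ (FreeGroup (Gen n)) w) = j (pr w) :=
  prbar_single w 1

lemma prbar_DF (w : FreeGroup (Gen n)) (s : Gen n) :
    prbar (DF w s) = DG w s := by
  induction w using FreeGroup.induction_on with
  | C1 => rw [show DF (n := n) 1 = 0 from Dg_one _, show DG (n := n) 1 = 0 from Dg_one _]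
          simp
  | of t =>
      rw [show DF (n := n) (FreeGroup.of t) = Pi.single t 1 from Dg_of _ t,
        show DG (n := n) (FreeGroup.of t) = Pi.single t 1 from Dg_of _ t]
      rcases eq_or_ne s t with h | h
      · subst h; rw [Pi.single_eq_same, Pi.single_eq_same]; exact map_one prbar
      · rw [Pi.single_eq_of_ne h, Pi.single_eq_of_ne h]; exact map_zero prbar
  | inv_of t ih =>
      set v := (FreeGroup.of t : FreeGroup (Gen n)) with hv
      rw [show DF v⁻¹ = fun s => -(MonoidAlgebra.of ℤ (FreeGroup (Gen n))
            ((MonoidHom.id (FreeGroup (Gen n))) v)⁻¹ * DF v s) from Dg_inv _ v,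
        show DG v⁻¹ = fun s => -(j ((pr v)⁻¹) * DG v s) from Dg_inv _ v]
      simp only [MonoidHom.id_apply]
      rw [map_neg, map_mul, prbar_of, ih]
      rfl
  | mul v w ihv ihw =>
      rw [show DF (v * w) = fun s => DF v s + MonoidAlgebra.of ℤ (FreeGroup (Gen n))
            ((MonoidHom.id (FreeGroup (Gen n))) v) * DF w s from Dg_mul _ v w,
        show DG (v * w) = fun s => DG v s + j (pr v) * DG w s from Dg_mul _ v w]
      simp only [MonoidHom.id_apply]
      rw [map_add, map_mul, prbar_of, ihv, ihw]

end Surface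

section Comm
variable {n : ℕ}

lemma pr_inl (i : Fin n) : pr (FreeGroup.of (Sum.inl i)) = a i := rfl
lemma pr_inr (i : Fin n) : pr (FreeGroup.of (Sum.inr i)) = b i := rfl

lemma j_eq : (j : SurfaceGroup n →* A n) = MonoidAlgebra.of ℤ (SurfaceGroup n) := rfl

lemma DG_comm (i : Fin n) :
    DG (⁅(FreeGroup.of (Sum.inl i) : FreeGroup (Gen n)), FreeGroup.of (Sum.inr i)⁆)
      = fun s => Pi.single (Sum.inl i) ((1 : A n) - j (a i * b i * (a i)⁻¹)) s
          + Pi.single (Sum.inr i) (j (a i) - j (a i * b i * (a i)⁻¹ * (b i)⁻¹)) s := by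
  obtain ⟨x, hx⟩ : ∃ x : FreeGroup (Gen n), x = FreeGroup.of (Sum.inl i) := ⟨_, rfl⟩
  obtain ⟨y, hy⟩ : ∃ y : FreeGroup (Gen n), y = FreeGroup.of (Sum.inr i) := ⟨_, rfl⟩
  rw [← hx, ← hy]
  have hcomm : (⁅x, y⁆ : FreeGroup (Gen n)) = x * y * x⁻¹ * y⁻¹ := rfl
  funext s
  have m1 := congrFun (Dg_mul (pr (n := n)) (x * y * x⁻¹) y⁻¹) s
  have m2 := congrFun (Dg_mul (pr (n := n)) (x * y) x⁻¹) s
  have m3 := congrFun (Dg_mul (pr (n := n)) x y) s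
  have i1 := congrFun (Dg_inv (pr (n := n)) x) s
  have i2 := congrFun (Dg_inv (pr (n := n)) y) s
  have o1 : Dg (pr (n := n)) x s = (Pi.single (Sum.inl i) 1 : Gen n → A n) s := by
    rw [hx]; exact congrFun (Dg_of (pr (n := n)) (Sum.inl i)) s
  have o2 : Dg (pr (n := n)) y s = (Pi.single (Sum.inr i) 1 : Gen n → A n) s := by
    rw [hy]; exact congrFun (Dg_of (pr (n := n)) (Sum.inr i)) s
  show Dg pr (⁅x, y⁆) s = _
  rw [hcomm, m1, m2, m3, i1, i2]
  rw [o1, o2]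
  simp only [map_mul, map_inv, hx, hy, pr_inl, pr_inr, ← j_eq]
  rcases s with i' | i'
  · rcases eq_or_ne i' i with h | h
    · subst h
      simp only [Pi.single_eq_same, Pi.single_apply, Sum.inl.injEq, Sum.inr.injEq,
        reduceCtorEq, if_false, if_true]
      noncomm_ring
    · simp only [Pi.single_apply, Sum.inl.injEq, Sum.inr.injEq, reduceCtorEq, if_false,
        if_neg h]
      simp
  · rcases eq_or_ne i' i with h | h
    · subst h
      simp only [Pi.single_eq_same, Pi.single_apply, Sum.inl.injEq, Sum.inr.injEq,
        reduceCtorEq, if_false, if_true]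
      noncomm_ring
    · simp only [Pi.single_apply, Sum.inl.injEq, Sum.inr.injEq, reduceCtorEq, if_false,
        if_neg h]
      simp

end Comm

section Rel
variable {n : ℕ}

noncomputable def Lrel (n : ℕ) : List (FreeGroup (Gen n)) :=
  List.ofFn fun i : Fin n =>
    ⁅(FreeGroup.of (Sum.inl i) : FreeGroup (Gen n)), FreeGroup.of (Sum.inr i)⁆

lemma rel_eq : rel n = (Lrel n).prod := rfl

lemma pr_take (k : ℕ) : pr (((Lrel n).take k).prod) = q k := by
  have h2 : (Lrel n).map pr = List.ofFn fun i : Fin n => ⁅a i, b i⁆ := by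
    rw [Lrel, List.map_ofFn]
    congr 1
  rw [map_list_prod, List.map_take, h2]
  rfl

lemma DG_take : ∀ k, k ≤ n →
    DG (((Lrel n).take k).prod) = fun s =>
      Sum.elim (fun i : Fin n => if i.val < k then Fa i else 0)
               (fun i : Fin n => if i.val < k then Fb i else 0) s := by
  intro k
  induction k with
  | zero =>
      intro _
      funext s
      rw [List.take_zero, List.prod_nil, show DG (n := n) 1 = 0 from Dg_one pr]
      cases s <;> simp
  | succ k ih =>
      intro hk
      have hk' : k ≤ n := Nat.le_of_succ_le hk
      have hkn : k < n := hk
      have hlen : k < (Lrel n).length := by simpa [Lrel] using hkn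
      rw [List.prod_take_succ _ k hlen]
      have hget : (Lrel n).get ⟨k, hlen⟩
          = ⁅(FreeGroup.of (Sum.inl (⟨k, hkn⟩ : Fin n)) : FreeGroup (Gen n)),
              FreeGroup.of (Sum.inr ⟨k, hkn⟩)⁆ := by
        simp [Lrel, List.get_ofFn]
      rw [List.get_eq_getElem] at hget
      rw [hget]
      rw [show DG (((Lrel n).take k).prod
              * ⁅(FreeGroup.of (Sum.inl (⟨k, hkn⟩ : Fin n)) : FreeGroup (Gen n)),
                  FreeGroup.of (Sum.inr ⟨k, hkn⟩)⁆)
            = fun s => DG (((Lrel n).take k).prod) s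
              + j (pr (((Lrel n).take k).prod))
                * DG (⁅(FreeGroup.of (Sum.inl (⟨k, hkn⟩ : Fin n)) : FreeGroup (Gen n)),
                    FreeGroup.of (Sum.inr ⟨k, hkn⟩)⁆) s
            from Dg_mul pr _ _]
      rw [ih hk', pr_take, DG_comm]
      funext s
      rcases s with i | i
      · simp only [Sum.elim_inl, Pi.single_apply, Sum.inl.injEq, Sum.inr.injEq,
          reduceCtorEq, if_false, add_zero]
        rcases Nat.lt_trichotomy i.val k with h | h | h
        · have hik : i ≠ ⟨k, hkn⟩ := by
            intro hh; rw [hh] at h; exact absurd h (lt_irrefl _)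
          rw [if_pos h, if_pos (Nat.lt_succ_of_lt h), if_neg hik, mul_zero, add_zero]
        · have hik : i = ⟨k, hkn⟩ := Fin.ext h
          rw [if_neg (by omega : ¬ (i.val < k)), if_pos (by omega : i.val < k + 1),
            if_pos hik, zero_add, hik]
          rfl
        · have hik : i ≠ ⟨k, hkn⟩ := by
            intro hh; rw [hh] at h; exact absurd h (lt_irrefl _)
          rw [if_neg (by omega : ¬ (i.val < k)), if_neg (by omega : ¬ (i.val < k + 1)),
            if_neg hik, mul_zero, zero_add]
      · simp only [Sum.elim_inr, Pi.single_apply, Sum.inl.injEq, Sum.inr.injEq,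
          reduceCtorEq, if_false, zero_add]
        rcases Nat.lt_trichotomy i.val k with h | h | h
        · have hik : i ≠ ⟨k, hkn⟩ := by
            intro hh; rw [hh] at h; exact absurd h (lt_irrefl _)
          rw [if_pos h, if_pos (Nat.lt_succ_of_lt h), if_neg hik, mul_zero, add_zero]
        · have hik : i = ⟨k, hkn⟩ := Fin.ext h
          rw [if_neg (by omega : ¬ (i.val < k)), if_pos (by omega : i.val < k + 1),
            if_pos hik, zero_add, hik]
          have hq : q (((⟨k, hkn⟩ : Fin n) : ℕ)) = q (n := n) k := rfl
          rw [Fb, hq]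
          simp only [map_mul]
          noncomm_ring
        · have hik : i ≠ ⟨k, hkn⟩ := by
            intro hh; rw [hh] at h; exact absurd h (lt_irrefl _)
          rw [if_neg (by omega : ¬ (i.val < k)), if_neg (by omega : ¬ (i.val < k + 1)),
            if_neg hik, mul_zero, zero_add]

lemma DG_rel : DG (rel n) = fox := by
  have h1 : (Lrel n).take n = Lrel n := by
    apply List.take_of_length_le
    simp [Lrel]
  rw [rel_eq, ← h1, DG_take n le_rfl]
  funext s
  rcases s with i | i
  · simp only [Sum.elim_inl, if_pos i.isLt]
    rfl
  · simp only [Sum.elim_inr, if_pos i.isLt]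
    rfl

lemma fox_mem_range : (fox : Gen n → A n) ∈ LinearMap.range (d2 (n := n)) :=
  ⟨1, by funext s; rw [d2_apply, one_mul]⟩

noncomputable def Hsub (n : ℕ) : Subgroup (FreeGroup (Gen n)) where
  carrier := {w | pr w = 1 ∧ DG w ∈ LinearMap.range (d2 (n := n))}
  one_mem' := ⟨map_one pr,
    by rw [show DG (n := n) 1 = 0 from Dg_one pr]; exact Submodule.zero_mem _⟩
  mul_mem' := by
    rintro v w ⟨hv1, hv2⟩ ⟨hw1, hw2⟩
    refine ⟨by rw [map_mul, hv1, hw1, one_mul], ?_⟩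
    rw [show DG (v * w) = fun s => DG v s + j (pr v) * DG w s from Dg_mul pr v w]
    rw [show (fun s => DG v s + j (pr v) * DG w s) = DG v + (j (pr v)) • DG w from rfl]
    exact Submodule.add_mem _ hv2 (Submodule.smul_mem _ _ hw2)
  inv_mem' := by
    rintro w ⟨h1, h2⟩
    refine ⟨by rw [map_inv, h1, inv_one], ?_⟩
    rw [show DG w⁻¹ = fun s => -(j ((pr w)⁻¹) * DG w s) from Dg_inv pr w]
    rw [show (fun s => -(j ((pr w)⁻¹) * DG w s)) = -((j ((pr w)⁻¹)) • DG w) from rfl]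
    exact Submodule.neg_mem _ (Submodule.smul_mem _ _ h2)

instance Hsub_normal (n : ℕ) : (Hsub n).Normal := by
  constructor
  intro w hw u
  obtain ⟨h1, h2⟩ := hw
  constructor
  · rw [map_mul, map_mul, h1, map_inv, mul_one, mul_inv_cancel]
  · have e : DG (u * w * u⁻¹) = fun s => j (pr u) * DG w s := by
      funext s
      have m1 := congrFun (Dg_mul pr (u * w) u⁻¹) s
      have m2 := congrFun (Dg_mul pr u w) s
      have i1 := congrFun (Dg_inv pr u) s
      rw [show DG (u * w * u⁻¹) s = _ from m1, m2, i1]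
      show DG u s + j (pr u) * DG w s + j (pr (u * w)) * -(j ((pr u)⁻¹) * DG u s)
          = j (pr u) * DG w s
      rw [map_mul, h1, mul_one, mul_neg, ← mul_assoc, ← map_mul, mul_inv_cancel, map_one,
        one_mul]
      abel
    rw [e, show (fun s => j (pr u) * DG w s) = (j (pr u)) • DG w from rfl]
    exact Submodule.smul_mem _ _ h2

lemma normalClosure_le_Hsub :
    Subgroup.normalClosure ({rel n} : Set (FreeGroup (Gen n))) ≤ Hsub n := by
  apply Subgroup.normalClosure_le_normal
  rintro r hr
  rw [Set.mem_singleton_iff] at hr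
  subst hr
  exact ⟨(pr_eq_one_iff _).mpr (Subgroup.subset_normalClosure (Set.mem_singleton _)),
    by rw [DG_rel]; exact fox_mem_range⟩

end Rel

section FreeRing
variable {n : ℕ}

noncomputable def d1F (n : ℕ) :
    (Gen n → MonoidAlgebra ℤ (FreeGroup (Gen n))) →ₗ[ℤ] MonoidAlgebra ℤ (FreeGroup (Gen n)) where
  toFun v := ∑ s, v s * (MonoidAlgebra.of ℤ (FreeGroup (Gen n)) (FreeGroup.of s) - 1)
  map_add' v w := by simp [add_mul, Finset.sum_add_distrib]
  map_smul' r v := by simp [Finset.smul_sum, smul_mul_assoc, mul_assoc]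

noncomputable def rho (n : ℕ) :
    MonoidAlgebra ℤ (FreeGroup (Gen n)) →ₗ[ℤ] (Gen n → MonoidAlgebra ℤ (FreeGroup (Gen n))) :=
  (Finsupp.lift _ ℤ _ (fun w => DF w)) ∘ₗ (MonoidAlgebra.coeffLinearEquiv ℤ).toLinearMap

lemma rho_single (w : FreeGroup (Gen n)) (k : ℤ) :
    rho n (MonoidAlgebra.single w k) = k • DF w := by
  show ((Finsupp.lift (Gen n → MonoidAlgebra ℤ (FreeGroup (Gen n))) ℤ (FreeGroup (Gen n)))
      (fun w => DF w)) (Finsupp.single w k) = k • DF w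
  rw [Finsupp.lift_apply, Finsupp.sum_single_index]
  rw [zero_smul]

lemma rho_d1F (v : Gen n → MonoidAlgebra ℤ (FreeGroup (Gen n))) : rho n (d1F n v) = v := by
  classical
  have hsingle : ∀ (s : Gen n) (w : FreeGroup (Gen n)) (k : ℤ),
      rho n (d1F n (Pi.single s (MonoidAlgebra.single w k)))
        = Pi.single s (MonoidAlgebra.single w k) := by
    intro s w k
    have hd : d1F n (Pi.single s (MonoidAlgebra.single w k))
        = MonoidAlgebra.single (w * FreeGroup.of s) k - MonoidAlgebra.single w k := by
      show (∑ t, (Pi.single s (MonoidAlgebra.single w k)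
            : Gen n → MonoidAlgebra ℤ (FreeGroup (Gen n))) t
          * (MonoidAlgebra.of ℤ (FreeGroup (Gen n)) (FreeGroup.of t) - 1))
        = MonoidAlgebra.single (w * FreeGroup.of s) k - MonoidAlgebra.single w k
      rw [Finset.sum_eq_single s]
      · rw [Pi.single_eq_same, mul_sub, mul_one]
        congr 1
        have := MonoidAlgebra.single_mul_single (R := ℤ) (m₁ := w) (m₂ := FreeGroup.of s)
          (r₁ := k) (r₂ := 1)
        rw [mul_one] at this
        exact this
      · intro t _ hts; rw [Pi.single_eq_of_ne hts, zero_mul]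
      · intro h; exact absurd (Finset.mem_univ s) h
    rw [hd, map_sub, rho_single, rho_single]
    have hDF : DF (w * FreeGroup.of s)
        = fun t => DF w t + MonoidAlgebra.single w 1 * (Pi.single s 1 : Gen n → _) t := by
      rw [show DF (w * FreeGroup.of s) = fun t => DF w t
          + MonoidAlgebra.of ℤ (FreeGroup (Gen n)) ((MonoidHom.id (FreeGroup (Gen n))) w)
            * DF (FreeGroup.of s) t from Dg_mul _ _ _]
      funext t
      rw [show DF (n := n) (FreeGroup.of s) = (Pi.single s 1 : Gen n → _) from Dg_of _ s]
      rfl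
    rw [hDF]
    funext t
    rcases eq_or_ne t s with h | h
    · subst h
      simp only [Pi.sub_apply, Pi.smul_apply, Pi.single_eq_same, mul_one]
      rw [smul_add]
      have : k • (MonoidAlgebra.single w (1 : ℤ)) = MonoidAlgebra.single w k := by
        rw [MonoidAlgebra.smul_single]
        norm_num
      simp [this]
    · simp only [Pi.sub_apply, Pi.smul_apply, Pi.single_eq_of_ne h, mul_zero, add_zero,
        sub_self]
  have hs : ∀ (s : Gen n) (bb : MonoidAlgebra ℤ (FreeGroup (Gen n))),
      rho n (d1F n (Pi.single s bb)) = Pi.single s bb := by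
    intro s bb
    induction bb using MonoidAlgebra.induction with
    | zero => simp
    | single_add w k f hwf hk ih =>
        rw [Pi.single_add, map_add, map_add, ih, hsingle s w k]
  conv_lhs => rw [← Finset.univ_sum_single v]
  rw [map_sum, map_sum]
  conv_rhs => rw [← Finset.univ_sum_single v]
  exact Finset.sum_congr rfl fun s _ => hs s (v s)

def T (n : ℕ) : Set (MonoidAlgebra ℤ (FreeGroup (Gen n))) :=
  {z | ∃ u w : FreeGroup (Gen n),
    w ∈ Subgroup.normalClosure ({rel n} : Set (FreeGroup (Gen n))) ∧
    z = MonoidAlgebra.single u 1 * (MonoidAlgebra.single w 1 - 1)}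

lemma prbar_apply (x : MonoidAlgebra ℤ (FreeGroup (Gen n))) :
    prbar (n := n) x = MonoidAlgebra.mapDomain pr x := rfl

lemma mem_span_T (x : MonoidAlgebra ℤ (FreeGroup (Gen n))) (hx : prbar (n := n) x = 0) :
    x ∈ Submodule.span ℤ (T n) := by
  classical
  have hσ : ∀ g, pr (Function.surjInv (pr_surjective (n := n)) g) = g :=
    Function.surjInv_eq pr_surjective
  set σ : SurfaceGroup n → FreeGroup (Gen n) := Function.surjInv pr_surjective with hσdef
  have hy : Finsupp.mapDomain (σ ∘ pr) x.coeff = 0 := by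
    rw [Finsupp.mapDomain_comp, show Finsupp.mapDomain pr x.coeff = (prbar x).coeff from rfl,
      hx, MonoidAlgebra.coeff_zero, Finsupp.mapDomain_zero]
  have hysum : Finsupp.mapDomain (σ ∘ pr) x.coeff
      = ∑ u ∈ x.coeff.support, Finsupp.single (σ (pr u)) (x.coeff u) := rfl
  have hxsum : x.coeff = ∑ u ∈ x.coeff.support, Finsupp.single u (x.coeff u) := by
    conv_lhs => rw [← Finsupp.sum_single x.coeff]
    rfl
  have hkey : x = ∑ u ∈ x.coeff.support,
      (MonoidAlgebra.single u (x.coeff u) - MonoidAlgebra.single (σ (pr u)) (x.coeff u)) := by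
    rw [← MonoidAlgebra.coeff_inj, MonoidAlgebra.coeff_sum]
    simp only [MonoidAlgebra.coeff_sub, MonoidAlgebra.coeff_single]
    rw [Finset.sum_sub_distrib, ← hysum, hy, sub_zero, ← hxsum]
  rw [hkey]
  apply Submodule.sum_mem
  intro u _
  have hw : pr ((σ (pr u))⁻¹ * u) = 1 := by
    rw [map_mul, map_inv, hσ, inv_mul_cancel]
  have hwN : (σ (pr u))⁻¹ * u ∈ Subgroup.normalClosure ({rel n} : Set (FreeGroup (Gen n))) :=
    (pr_eq_one_iff _).mp hw
  have he : (MonoidAlgebra.single u (x.coeff u) - MonoidAlgebra.single (σ (pr u)) (x.coeff u)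
        : MonoidAlgebra ℤ (FreeGroup (Gen n)))
      = (x.coeff u) • (MonoidAlgebra.single (σ (pr u)) (1 : ℤ)
          * (MonoidAlgebra.single ((σ (pr u))⁻¹ * u) (1 : ℤ)
            - (1 : MonoidAlgebra ℤ (FreeGroup (Gen n))))) := by
    rw [mul_sub, mul_one, MonoidAlgebra.single_mul_single, one_mul,
      mul_inv_cancel_left, smul_sub, MonoidAlgebra.smul_single, MonoidAlgebra.smul_single]
    norm_num
  rw [he]
  exact Submodule.smul_mem _ _
    (Submodule.subset_span ⟨σ (pr u), (σ (pr u))⁻¹ * u, hwN, rfl⟩)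

end FreeRing

section Final
variable {n : ℕ}

noncomputable def ab {n : ℕ} : SurfaceGroup n →* Multiplicative ℤ :=
  PresentedGroup.toGroup (f := fun s : Gen n =>
    Sum.elim (fun _ => (1 : Multiplicative ℤ)) (fun _ => Multiplicative.ofAdd 1) s)
    (by
      intro r hr
      rw [Set.mem_singleton_iff] at hr
      subst hr
      rw [rel, map_list_prod]
      apply List.prod_eq_one
      intro g hg
      obtain ⟨w, hw, hgw⟩ := List.mem_map.mp hg
      obtain ⟨i, hi⟩ := List.mem_ofFn.mp hw
      rw [← hgw, ← hi, map_commutatorElement]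
      exact commutatorElement_eq_one_iff_commute.mpr (Commute.all _ _))

lemma ab_a (i : Fin n) : ab (a i) = 1 := PresentedGroup.toGroup.of _
lemma ab_b (i : Fin n) : ab (b i) = Multiplicative.ofAdd 1 := PresentedGroup.toGroup.of _

lemma aug_j (g : SurfaceGroup n) : aug (j g) = 1 := by
  show (MonoidAlgebra.lift ℤ ℤ (SurfaceGroup n) 1) (MonoidAlgebra.of ℤ (SurfaceGroup n) g) = 1
  rw [MonoidAlgebra.lift_of]
  rfl

lemma aug_single (g : SurfaceGroup n) (k : ℤ) : aug (MonoidAlgebra.single g k) = k := by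
  show (MonoidAlgebra.lift ℤ ℤ (SurfaceGroup n) 1) (MonoidAlgebra.single g k) = k
  rw [MonoidAlgebra.lift_single]
  simp

lemma j_sub_one_mem (g : SurfaceGroup n) : j g - 1 ∈ LinearMap.range (d1 (n := n)) := by
  obtain ⟨w, hw⟩ := pr_surjective g
  exact ⟨DG w, by rw [d1_DG, hw]⟩

noncomputable def Psi (n : ℕ) : MonoidAlgebra ℤ (FreeGroup (Gen n)) →ₗ[ℤ] P1 n where
  toFun x := fun s => prbar (rho n x s)
  map_add' x y := by
    funext s
    show prbar (rho n (x + y) s) = prbar (rho n x s) + prbar (rho n y s)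
    rw [map_add (rho n) x y, Pi.add_apply, map_add]
  map_smul' k x := by
    funext s
    show prbar (rho n (k • x) s) = k • prbar (rho n x s)
    rw [map_smul (rho n) k x, Pi.smul_apply, map_zsmul]

lemma span_T_le :
    Submodule.span ℤ (T n) ≤
      Submodule.comap (Psi n) ((LinearMap.range (d2 (n := n))).restrictScalars ℤ) := by
  rw [Submodule.span_le]
  rintro z ⟨u, w, hwN, rfl⟩
  have hprod : MonoidAlgebra.single u (1 : ℤ) * (MonoidAlgebra.single w 1 - 1)
      = MonoidAlgebra.single (u * w) 1 - MonoidAlgebra.single u 1 := by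
    rw [mul_sub, mul_one, MonoidAlgebra.single_mul_single, one_mul]
  rw [SetLike.mem_coe, Submodule.mem_comap]
  show Psi n (MonoidAlgebra.single u (1 : ℤ) * (MonoidAlgebra.single w 1 - 1)) ∈ _
  rw [hprod]
  have hPsi : Psi n (MonoidAlgebra.single (u * w) 1 - MonoidAlgebra.single u 1)
      = (j (pr u)) • DG w := by
    show (fun s => prbar (rho n (MonoidAlgebra.single (u * w) 1
        - MonoidAlgebra.single u 1) s)) = (j (pr u)) • DG w
    funext s
    rw [map_sub, rho_single, rho_single, one_smul, one_smul]
    have hD : DF (u * w) s - DF u s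
        = MonoidAlgebra.single u 1 * DF w s := by
      rw [show DF (u * w) s = DF u s + MonoidAlgebra.of ℤ (FreeGroup (Gen n))
          ((MonoidHom.id (FreeGroup (Gen n))) u) * DF w s
        from congrFun (Dg_mul (MonoidHom.id (FreeGroup (Gen n))) u w) s]
      simp only [MonoidHom.id_apply]
      show DF u s + MonoidAlgebra.of ℤ (FreeGroup (Gen n)) u * DF w s - DF u s = _
      rw [add_sub_cancel_left]
      rfl
    show prbar ((DF (u * w) - DF u) s) = _
    rw [Pi.sub_apply, hD, map_mul, show (MonoidAlgebra.single u (1 : ℤ))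
        = MonoidAlgebra.of ℤ (FreeGroup (Gen n)) u from rfl, prbar_of, prbar_DF]
    rfl
  rw [hPsi]
  exact Submodule.smul_mem _ _ (normalClosure_le_Hsub hwN).2

end Final

theorem statement0 (n : ℕ) (hn : 1 ≤ n) :
    Function.Surjective (aug (n := n)) ∧
    (∀ v : P0 n, aug v = 0 ↔ v ∈ LinearMap.range (d1 (n := n))) ∧
    LinearMap.ker (d1 (n := n)) = LinearMap.range (d2 (n := n)) ∧
    Function.Injective (d2 (n := n)) := by
  classical
  have haugd1 : ∀ f : P1 n, aug (d1 f) = 0 := by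
    intro f
    rw [d1_apply, map_sum]
    apply Finset.sum_eq_zero
    intro s _
    rw [map_mul]
    have hc : aug (c (n := n) s) = 0 := by
      rcases s with i | i
      · show aug (j (a i) - 1) = 0
        rw [map_sub, aug_j, map_one, sub_self]
      · show aug (j (b i) - 1) = 0
        rw [map_sub, aug_j, map_one, sub_self]
    rw [hc, mul_zero]
  have hclaim : ∀ v : P0 n, v - (aug v) • (1 : A n) ∈ LinearMap.range (d1 (n := n)) := by
    intro v
    induction v using MonoidAlgebra.induction with
    | zero => rw [map_zero, zero_smul, sub_zero]; exact Submodule.zero_mem _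
    | single_add g k f hgf hk ih =>
        have key : ∀ x y : P0 n,
            x - aug x • (1 : A n) ∈ LinearMap.range (d1 (n := n)) →
            y - aug y • (1 : A n) ∈ LinearMap.range (d1 (n := n)) →
            (x + y) - aug (x + y) • (1 : A n) ∈ LinearMap.range (d1 (n := n)) := by
          intro x y hx hy
          have he : (x + y) - aug (x + y) • (1 : A n)
              = (x - aug x • 1) + (y - aug y • 1) := by
            rw [map_add, add_smul]; abel
          rw [he]
          exact Submodule.add_mem _ hx hy
        have hsingle : (MonoidAlgebra.single g k : A n)
            - aug (MonoidAlgebra.single g k) • (1 : A n)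
            ∈ LinearMap.range (d1 (n := n)) := by
          rw [aug_single]
          have h2 : MonoidAlgebra.single g k - k • (1 : A n) = k • (j g - 1) := by
            rw [smul_sub, show (j g : A n) = MonoidAlgebra.single g 1 from rfl,
              MonoidAlgebra.smul_single]
            norm_num
          rw [h2]
          exact zsmul_mem (j_sub_one_mem g) k
        exact key _ _ hsingle ih
  refine ⟨?_, ?_, ?_, ?_⟩
  · -- surjectivity of aug
    intro k
    exact ⟨k • 1, by rw [map_zsmul, map_one, smul_eq_mul, mul_one]⟩
  · -- exactness at P0
    intro v
    constructor
    · intro hv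
      have := hclaim v
      rw [hv, zero_smul, sub_zero] at this
      exact this
    · rintro ⟨f, rfl⟩
      exact haugd1 f
  · -- exactness at P1
    have hfox : d1 (fox : P1 n) = 0 := by
      rw [← DG_rel, d1_DG,
        (pr_eq_one_iff _).mpr (Subgroup.subset_normalClosure (Set.mem_singleton _)),
        map_one, sub_self]
    apply le_antisymm
    · intro v hv
      rw [LinearMap.mem_ker] at hv
      set σG : SurfaceGroup n → FreeGroup (Gen n) := Function.surjInv pr_surjective with hσG
      have hσ : ∀ g, pr (σG g) = g := Function.surjInv_eq pr_surjective
      set vt : Gen n → MonoidAlgebra ℤ (FreeGroup (Gen n)) :=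
        fun s => MonoidAlgebra.mapDomain σG (v s) with hvt_def
      have hlift : ∀ s, prbar (vt s) = v s := by
        intro s
        rw [hvt_def, prbar_apply]
        apply MonoidAlgebra.coeff_injective
        show Finsupp.mapDomain pr (Finsupp.mapDomain σG (v s).coeff) = (v s).coeff
        rw [← Finsupp.mapDomain_comp,
          show (pr (n := n)) ∘ σG = id from funext hσ, Finsupp.mapDomain_id]
      have h0 : prbar (d1F n vt) = 0 := by
        show prbar (∑ s, vt s * (MonoidAlgebra.of ℤ (FreeGroup (Gen n)) (FreeGroup.of s) - 1))
          = 0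
        rw [map_sum]
        have heach : ∀ s, prbar (vt s
            * (MonoidAlgebra.of ℤ (FreeGroup (Gen n)) (FreeGroup.of s) - 1)) = v s * c s := by
          intro s
          rw [map_mul, map_sub, map_one, prbar_of, hlift, ← c_eq]
        rw [Finset.sum_congr rfl fun s _ => heach s, ← d1_apply, hv]
      have hspan := mem_span_T _ h0
      have hvt2 : vt = rho n (d1F n vt) := (rho_d1F vt).symm
      have hmem := span_T_le hspan
      rw [Submodule.mem_comap] at hmem
      have hPsival : Psi n (d1F n vt) = v := by
        show (fun s => prbar (rho n (d1F n vt) s)) = v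
        funext s
        rw [← hvt2]
        exact hlift s
      rw [hPsival] at hmem
      exact hmem
    · rintro _ ⟨r, rfl⟩
      rw [LinearMap.mem_ker, d1_apply]
      have : ∀ s : Gen n, d2 r s * c s = r * (fox s * c s) := by
        intro s
        rw [d2_apply, mul_assoc]
      rw [Finset.sum_congr rfl fun s _ => this s, ← Finset.mul_sum, ← d1_apply, hfox,
        mul_zero]
  · -- injectivity of d2
    have key : ∀ r : P2 n, d2 r = 0 → r = 0 := by
      intro r hr
      have i0 : Fin n := ⟨0, hn⟩
      have h1 : r * fox (Sum.inl (⟨0, hn⟩ : Fin n)) = 0 := by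
        rw [← d2_apply, hr]
        rfl
      have hfa : fox (Sum.inl (⟨0, hn⟩ : Fin n))
          = 1 - j (a ⟨0, hn⟩ * b ⟨0, hn⟩ * (a ⟨0, hn⟩)⁻¹) := by
        show Fa (⟨0, hn⟩ : Fin n) = _
        have : Fa (⟨0, hn⟩ : Fin n) = j (1 : SurfaceGroup n)
            * (1 - j (a ⟨0, hn⟩ * b ⟨0, hn⟩ * (a ⟨0, hn⟩)⁻¹)) := rfl
        rw [this, map_one, one_mul]
      rw [hfa] at h1
      have hrg : r = r * MonoidAlgebra.single (a ⟨0, hn⟩ * b ⟨0, hn⟩ * (a ⟨0, hn⟩)⁻¹) 1 := by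
        rw [mul_sub, mul_one, sub_eq_zero] at h1
        exact h1
      set g : SurfaceGroup n := a ⟨0, hn⟩ * b ⟨0, hn⟩ * (a ⟨0, hn⟩)⁻¹ with hgdef
      have hcoef : ∀ y : SurfaceGroup n, r.coeff y = r.coeff (y * g⁻¹) := by
        intro y
        conv_lhs => rw [hrg]
        rw [MonoidAlgebra.coeff_mul_single_apply, mul_one]
      by_contra hr0
      obtain ⟨y, hy⟩ := Finsupp.support_nonempty_iff.mpr (mt MonoidAlgebra.coeff_eq_zero.mp hr0)
      have hk : ∀ m : ℕ, r.coeff (y * (g⁻¹) ^ m) = r.coeff y := by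
        intro m
        induction m with
        | zero => rw [pow_zero, mul_one]
        | succ m ih =>
            rw [pow_succ, ← mul_assoc, ← hcoef (y * g⁻¹ ^ m), ih]
      have habg : ab g = Multiplicative.ofAdd 1 := by
        rw [hgdef, map_mul, map_mul, map_inv, ab_a, ab_b, one_mul, inv_one, mul_one]
      have hinj : Function.Injective (fun m : ℕ => y * (g⁻¹) ^ m) := by
        intro m1 m2 he
        have he2 : (g⁻¹ : SurfaceGroup n) ^ m1 = g⁻¹ ^ m2 := mul_left_cancel he
        have he3 := congrArg ab he2
        rw [map_pow, map_pow, map_inv, habg] at he3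
        have he4 := congrArg Multiplicative.toAdd he3
        rw [toAdd_pow, toAdd_pow, toAdd_inv, toAdd_ofAdd] at he4
        simpa using he4
      have hsub : Set.range (fun m : ℕ => y * (g⁻¹) ^ m) ⊆ ↑r.coeff.support := by
        rintro z ⟨m, rfl⟩
        simp only [Finset.coe_sort_coe, Finset.mem_coe, Finsupp.mem_support_iff]
        rw [hk m]
        exact Finsupp.mem_support_iff.mp hy
      exact (Set.infinite_range_of_injective hinj) (r.coeff.support.finite_toSet.subset hsub)
    intro x y hxy
    have := key (x - y) (by rw [map_sub, hxy, sub_self])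
    exact sub_eq_zero.mp this


end SurfaceOr
end

section
/- Let G = ℤ ⊕ ℤ and let K = ℤ ⊕ ℤ be the ℤG-module on which both standard generators (1,0) and (0,1) of G act by the matrix φ = [[2,1],[1,1]] ∈ GL_2(ℤ) (so (m,n) ∈ G acts by φ^{m+n}). Then H^0(G, K) = 0, H^1(G, K) = 0, and H^2(G, K) = 0. -/
namespace TorusExample

/-- The group `G = ℤ ⊕ ℤ` (written multiplicatively). -/
abbrev G := Multiplicative (ℤ × ℤ)

/-- The matrix `φ = [[2,1],[1,1]]`. -/
def phiM : Matrix (Fin 2) (Fin 2) ℤ := !![2, 1; 1, 1]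

/-- The inverse matrix `φ⁻¹ = [[1,-1],[-1,2]]`. -/
def psiM : Matrix (Fin 2) (Fin 2) ℤ := !![1, -1; -1, 2]

/-- `φ` as a unit of the matrix ring (it lies in `GL₂(ℤ)` since `det φ = 1`). -/
def phiUnit : (Matrix (Fin 2) (Fin 2) ℤ)ˣ where
  val := phiM
  inv := psiM
  val_inv := by decide
  inv_val := by decide

/-- `φ` as an invertible `ℤ`-linear endomorphism of `ℤ²`. -/
noncomputable def phiEnd : (Module.End ℤ (Fin 2 → ℤ))ˣ :=
  Units.map (Matrix.toLinAlgEquiv' : Matrix (Fin 2) (Fin 2) ℤ ≃ₐ[ℤ] _).toRingEquiv.toMonoidHom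
    phiUnit

/-- The representation of `G = ℤ ⊕ ℤ` on `K = ℤ ⊕ ℤ` in which both standard generators
`(1,0)` and `(0,1)` act by `φ`; thus `(m,n)` acts by `φ^{m+n}`. -/
noncomputable def rho : Representation ℤ G (Fin 2 → ℤ) :=
  ((Units.coeHom (Module.End ℤ (Fin 2 → ℤ))).comp
      ((zpowersHom ((Module.End ℤ (Fin 2 → ℤ))ˣ)) phiEnd)).comp
    (AddMonoidHom.toMultiplicative (AddMonoidHom.fst ℤ ℤ + AddMonoidHom.snd ℤ ℤ))

/-- The `ℤG`-module `K`. -/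
noncomputable def K : Rep ℤ G := Rep.of rho

/-! ### Auxiliary material -/

/-- The central element `c = (1,0)` of `G`; it acts by `φ`. -/
def cc : G := Multiplicative.ofAdd ((1:ℤ), (0:ℤ))

/-- The matrix `(1 - φ)⁻¹ = [[0,-1],[-1,1]]` as a linear endomorphism. -/
noncomputable def NN : Module.End ℤ (Fin 2 → ℤ) := Matrix.toLin' !![0,-1;-1,1]

lemma rho_eq (g : G) :
    rho g = ((phiEnd ^ (g.toAdd.1 + g.toAdd.2) : _ˣ) : Module.End ℤ (Fin 2 → ℤ)) := rfl

lemma rho_cc : rho cc = Matrix.toLin' phiM := by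
  show ((phiEnd ^ ((1:ℤ) + 0) : _ˣ) : Module.End ℤ (Fin 2 → ℤ)) = phiEnd.val
  norm_num

lemma toLin'_mul' (A B : Matrix (Fin 2) (Fin 2) ℤ) :
    (Matrix.toLin' A) * (Matrix.toLin' B) = Matrix.toLin' (A * B) := by
  rw [Matrix.toLin'_mul]; rfl

lemma NN_mul : NN * (1 - rho cc) = 1 := by
  rw [rho_cc, show (1 - Matrix.toLin' phiM : Module.End ℤ (Fin 2 → ℤ)) =
    Matrix.toLin' (1 - phiM) by simp [map_sub, Matrix.toLin'_one, Module.End.one_eq_id]]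
  rw [NN, toLin'_mul', show !![(0:ℤ),-1;-1,1] * (1 - phiM) = 1 by decide]
  simp [Matrix.toLin'_one, Module.End.one_eq_id]

lemma NN_commute (g : G) : Commute NN (rho g) := by
  have h : Commute NN (phiEnd : Module.End ℤ (Fin 2 → ℤ)) := by
    unfold Commute SemiconjBy NN
    rw [show (phiEnd : Module.End ℤ (Fin 2 → ℤ)) = Matrix.toLin' phiM from rfl,
      toLin'_mul', toLin'_mul', show !![(0:ℤ),-1;-1,1] * phiM = phiM * !![(0:ℤ),-1;-1,1] by decide]
  rw [rho_eq]
  exact h.units_zpow_right _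

lemma NN_cancel (v : Fin 2 → ℤ) : NN (v - rho cc v) = v := by
  have := LinearMap.congr_fun NN_mul v
  simpa using this

lemma NN_apply_rho (g : G) (v : Fin 2 → ℤ) : NN (rho g v) = rho g (NN v) :=
  LinearMap.congr_fun (NN_commute g) v

/-- `H⁰` vanishes: the invariants are trivial since `φ - 1` is invertible. -/
lemma subsingleton_H0 : Subsingleton K.ρ.invariants := by
  constructor
  rintro ⟨a, ha⟩ ⟨b, hb⟩
  have key : ∀ x : Fin 2 → ℤ, (∀ g : G, rho g x = x) → x = 0 := by
    intro x hx
    have h1 : x - rho cc x = 0 := by rw [hx cc]; abel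
    have h2 := NN_cancel x
    rw [h1, map_zero] at h2
    exact h2.symm
  have ha' : ∀ g : G, rho g a = a := ha
  have hb' : ∀ g : G, rho g b = b := hb
  exact Subtype.ext ((key a ha').trans (key b hb').symm)

/-- Identity bridging the carrier of `K` with `Fin 2 → ℤ`. -/
abbrev vK (v : K) : Fin 2 → ℤ := v

/-- `H¹` vanishes: every 1-cocycle is a coboundary. -/
lemma oneCoboundaries_top : ∀ f : groupCohomology.cocycles₁ K, ⇑f ∈ groupCohomology.coboundaries₁ K := by
  intro f
  rw [groupCohomology.coboundaries₁, LinearMap.mem_range]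
  have hf : ∀ g h : G, vK (f (g * h))
      = rho g (vK (f h )) + vK (f g ) :=
    (groupCohomology.mem_cocycles₁_iff (A := K) f).1 f.2
  have claim : ∀ g : G, rho g (-(NN (f cc))) - (-(NN (f cc))) = vK (f g ) := by
    intro g
    have h1 := hf g cc
    have h2 := hf cc g
    rw [mul_comm g cc, h2] at h1
    have h3 : vK (f g ) - rho cc (vK (f g ))
        = vK (f cc ) - rho g (vK (f cc )) := by linear_combination -h1
    have h4 := NN_cancel (vK (f g))
    rw [h3, map_sub, NN_apply_rho] at h4
    rw [map_neg]
    linear_combination h4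
  exact ⟨-(NN (f cc)), funext fun g => by erw [groupCohomology.d₀₁_hom_apply]; exact claim g⟩

lemma subsingleton_H1 : Subsingleton (groupCohomology.H1 K) :=
  subsingleton_of_forall_eq 0 fun x => groupCohomology.H1_induction_on x fun f =>
    (groupCohomology.H1π_eq_zero_iff f).2 (oneCoboundaries_top f)

/-- `H²` vanishes: every 2-cocycle is a coboundary, with explicit primitive
`x g = (1-φ)⁻¹ (f (g,c) - f (c,g))`. -/
lemma twoCoboundaries_top : ∀ f : groupCohomology.cocycles₂ K, ⇑f ∈ groupCohomology.coboundaries₂ K := by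
  intro f
  rw [groupCohomology.coboundaries₂, LinearMap.mem_range]
  have hf : ∀ g h j : G,
      rho g (vK (f (h, j))) - vK (f (g * h, j))
        + vK (f (g, h * j)) - vK (f (g, h)) = 0 :=
    (groupCohomology.mem_cocycles₂_def (A := K) f).1 f.2
  have claim : ∀ g h : G,
      rho g (NN (vK (f (h, cc)) - vK (f (cc, h))))
        - NN (vK (f (g * h, cc)) - vK (f (cc, g * h)))
        + NN (vK (f (g, cc)) - vK (f (cc, g)))
        = vK (f (g, h)) := by
    intro g h
    have e1 := hf g h cc
    have e2 := hf g cc h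
    have e3 := hf cc g h
    rw [mul_comm h cc] at e1
    rw [mul_comm g cc] at e2
    have hstar : rho g (vK (f (h, cc)) - vK (f (cc, h)))
        - (vK (f (g * h, cc)) - vK (f (cc, g * h)))
        + (vK (f (g, cc)) - vK (f (cc, g)))
        = vK (f (g, h)) - rho cc (vK (f (g, h))) := by
      rw [map_sub]
      linear_combination e1 - e2 + e3
    have hexp : rho g (NN (vK (f (h, cc)) - vK (f (cc, h))))
        - NN (vK (f (g * h, cc)) - vK (f (cc, g * h)))
        + NN (vK (f (g, cc)) - vK (f (cc, g)))
        = NN (rho g (vK (f (h, cc)) - vK (f (cc, h)))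
            - (vK (f (g * h, cc)) - vK (f (cc, g * h)))
            + (vK (f (g, cc)) - vK (f (cc, g)))) := by
      simp only [map_sub, map_add, NN_apply_rho]
    rw [hexp, hstar]
    exact NN_cancel _
  exact ⟨fun g => NN (vK (f (g, cc)) - vK (f (cc, g))),
    funext fun p => by erw [groupCohomology.d₁₂_hom_apply]; exact claim p.1 p.2⟩

lemma subsingleton_H2 : Subsingleton (groupCohomology.H2 K) :=
  subsingleton_of_forall_eq 0 fun x => groupCohomology.H2_induction_on x fun f =>
    (groupCohomology.H2π_eq_zero_iff f).2 (twoCoboundaries_top f)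

/-- Remark 3.3: for `G = ℤ ⊕ ℤ` acting on `K = ℤ ⊕ ℤ` through the
matrix `φ = [[2,1],[1,1]]` (both generators acting by `φ`), all of `H⁰(G,K)`, `H¹(G,K)`
and `H²(G,K)` vanish. -/
theorem statement12 :
    Subsingleton (groupCohomology K 0) ∧
    Subsingleton (groupCohomology K 1) ∧
    Subsingleton (groupCohomology K 2) := by
  refine ⟨?_, ?_, ?_⟩
  · exact @Equiv.subsingleton _ _
      ((groupCohomology.H0Iso K).toLinearEquiv.toEquiv) subsingleton_H0
  · exact subsingleton_H1
  · exact subsingleton_H2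

end TorusExample
end
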